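/- Let Mᵢ, i = 1,…,r, be real power series with positive coefficients, analytic at z* > 0. Define D(z) = ∏ₖ(1 + Mₖ(z)) − Σᵢ Mᵢ(z)·∏_{j≠i}(1 + Mⱼ(z)). Then D'(z) = −Σᵢ Mᵢ(z)·Σ_{k≠i} Mₖ'(z)·∏_{l∉{i,k}}(1 + Mₗ(z)), and in particular D'(z) < 0 for all real z > 0 in the common domain of analyticity. -/

import Mathlib

open Finset

lemma key_deriv (R : ℝ) (hR : 0 < R) (f : ℝ → ℝ) (b : ℕ → ℝ)
    (hb : ∀ n, 0 < b (n + 1))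
    (hf : ∀ z ∈ Set.Ioo (0 : ℝ) R, HasSum (fun n : ℕ => b (n + 1) * z ^ (n + 1)) (f z))
    (z : ℝ) (hz : z ∈ Set.Ioo (0 : ℝ) R) :
    ∃ d : ℝ, HasDerivAt f d z ∧ 0 < d := by
  obtain ⟨hz0, hzR⟩ := hz
  obtain ⟨t, hzt, htR⟩ := exists_between hzR
  obtain ⟨s, hts, hsR⟩ := exists_between htR
  have ht0 : 0 < t := lt_trans hz0 hzt
  have hs0 : 0 < s := lt_trans ht0 hts
  have hMs : HasSum (fun n : ℕ => b (n + 1) * s ^ (n + 1)) (f s) := hf s ⟨hs0, hsR⟩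
  obtain ⟨C, hC⟩ : ∃ C, ∀ n, b (n + 1) * s ^ (n + 1) ≤ C := by
    obtain ⟨C, hC⟩ := (hMs.summable.tendsto_atTop_zero.bddAbove_range)
    exact ⟨C, fun n => hC (Set.mem_range_self n)⟩
  have hq0 : 0 < t / s := div_pos ht0 hs0
  have hq1 : t / s < 1 := (div_lt_one hs0).2 hts
  set u : ℕ → ℝ := fun n => b (n + 1) * (((n : ℝ) + 1) * t ^ n) with hudef
  have hu_nonneg : ∀ n, 0 ≤ u n := fun n => mul_nonneg (hb n).le (by positivity)
  have hu_le : ∀ n, u n ≤ (C / s) * (((n : ℝ) + 1) * (t / s) ^ n) := by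
    intro n
    have h1 : b (n + 1) * s ^ (n + 1) ≤ C := hC n
    have h2 : (0 : ℝ) ≤ ((n : ℝ) + 1) * t ^ n / s ^ (n + 1) := by positivity
    have h3 := mul_le_mul_of_nonneg_right h1 h2
    have hs' : s ≠ 0 := hs0.ne'
    calc u n = b (n + 1) * s ^ (n + 1) * (((n : ℝ) + 1) * t ^ n / s ^ (n + 1)) := by
          field_simp [hudef]; ring
      _ ≤ C * (((n : ℝ) + 1) * t ^ n / s ^ (n + 1)) := h3
      _ = (C / s) * (((n : ℝ) + 1) * (t / s) ^ n) := by
          rw [div_pow, pow_succ]; field_simp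
  have hu : Summable u := by
    have h2 : Summable (fun n : ℕ => (n : ℝ) ^ 1 * (t / s) ^ n) :=
      summable_pow_mul_geometric_of_norm_lt_one 1
        (by rw [Real.norm_eq_abs, abs_of_pos hq0]; exact hq1)
    have h3 : Summable (fun n : ℕ => (t / s) ^ n) := summable_geometric_of_lt_one hq0.le hq1
    have h1 : Summable (fun n : ℕ => ((n : ℝ) + 1) * (t / s) ^ n) := by
      simpa [add_mul, pow_one] using h2.add h3
    exact Summable.of_nonneg_of_le hu_nonneg hu_le (h1.mul_left _)
  set g : ℕ → ℝ → ℝ := fun n y => b (n + 1) * y ^ (n + 1) with hgdef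
  set g' : ℕ → ℝ → ℝ := fun n y => b (n + 1) * (((n : ℝ) + 1) * y ^ n) with hg'def
  have hg : ∀ n y, y ∈ Set.Ioo (0:ℝ) t → HasDerivAt (g n) (g' n y) y := by
    intro n y _
    have := (hasDerivAt_pow (n + 1) y).const_mul (b (n + 1))
    simpa [hgdef, hg'def] using this
  have hg'nonneg : ∀ n (y : ℝ), 0 ≤ y → 0 ≤ g' n y := by
    intro n y hy
    exact mul_nonneg (hb n).le (by positivity)
  have hg' : ∀ n y, y ∈ Set.Ioo (0:ℝ) t → ‖g' n y‖ ≤ u n := by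
    intro n y hy
    rw [Real.norm_eq_abs, abs_of_nonneg (hg'nonneg n y hy.1.le)]
    have hyn : y ^ n ≤ t ^ n := pow_le_pow_left₀ hy.1.le hy.2.le n
    exact mul_le_mul_of_nonneg_left
      (mul_le_mul_of_nonneg_left hyn (by positivity)) (hb n).le
  have hzIoo : z ∈ Set.Ioo (0:ℝ) t := ⟨hz0, hzt⟩
  have hg0 : Summable fun n => g n z := (hf z ⟨hz0, hzR⟩).summable
  have hd : HasDerivAt (fun y => ∑' n, g n y) (∑' n, g' n z) z :=
    hasDerivAt_tsum_of_isPreconnected hu isOpen_Ioo isPreconnected_Ioo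
      hg hg' hzIoo hg0 hzIoo
  have heq : f =ᶠ[nhds z] (fun y => ∑' n, g n y) := by
    filter_upwards [isOpen_Ioo.mem_nhds (⟨hz0, hzR⟩ : z ∈ Set.Ioo (0:ℝ) R)] with y hy
    exact ((hf y hy).tsum_eq).symm
  refine ⟨∑' n, g' n z, hd.congr_of_eventuallyEq heq, ?_⟩
  have hsum' : Summable fun n => g' n z := by
    apply Summable.of_nonneg_of_le (fun n => hg'nonneg n z hz0.le) _ hu
    intro n
    have := hg' n z hzIoo
    rwa [Real.norm_eq_abs, abs_of_nonneg (hg'nonneg n z hz0.le)] at this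
  have h0 : g' 0 z ≤ ∑' n, g' n z := Summable.le_tsum hsum' 0 (fun j _ => hg'nonneg j z hz0.le)
  have hpos0 : (0:ℝ) < g' 0 z := by
    simp only [hg'def, Nat.cast_zero, zero_add, pow_zero, one_mul, mul_one]
    exact hb 0
  linarith


/-- Let `Mᵢ`, `i = 1,…,r` (`r ≥ 2`), be real power series with positive coefficients and
zero constant term, convergent on `(0, R)`. With
`D(z) = ∏ₖ(1 + Mₖ(z)) − Σᵢ Mᵢ(z)·∏_{j≠i}(1 + Mⱼ(z))` we have
`D'(z) = −Σᵢ Mᵢ(z)·Σ_{k≠i} Mₖ'(z)·∏_{l∉{i,k}}(1 + Mₗ(z))`, and in particular `D'(z) < 0`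
for all real `z > 0` in the common domain of analyticity. -/
theorem deriv_denominator_neg (r : ℕ) (hr : 2 ≤ r) (R : ℝ) (hR : 0 < R)
    (M : Fin r → ℝ → ℝ) (a : Fin r → ℕ → ℝ)
    (ha : ∀ i n, 0 < a i (n + 1))
    (hM : ∀ i, ∀ z ∈ Set.Ioo (0 : ℝ) R,
      HasSum (fun n : ℕ => a i (n + 1) * z ^ (n + 1)) (M i z)) :
    ∀ z ∈ Set.Ioo (0 : ℝ) R,
      deriv (fun w => ∏ k, (1 + M k w)
          - ∑ i, M i w * ∏ j ∈ Finset.univ.erase i, (1 + M j w)) z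
        = -∑ i, M i z * ∑ k ∈ Finset.univ.erase i,
            deriv (M k) z * ∏ l ∈ (Finset.univ.erase i).erase k, (1 + M l z) ∧
      deriv (fun w => ∏ k, (1 + M k w)
          - ∑ i, M i w * ∏ j ∈ Finset.univ.erase i, (1 + M j w)) z < 0 := by
  intro z hz
  haveI : Nonempty (Fin r) := ⟨⟨0, by omega⟩⟩
  choose d hd hdpos using fun i => key_deriv R hR (M i) (a i) (ha i) (hM i) z hz
  have hMpos : ∀ i, 0 < M i z := by
    intro i
    have h1 : a i 1 * z ^ 1 ≤ M i z := by
      apply le_hasSum (hM i z hz) 0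
      intro j _
      have := (ha i j).le
      have hz0 := hz.1.le
      positivity
    have h2 : 0 < a i 1 * z ^ 1 := by have := ha i 0; have := hz.1; positivity
    linarith
  have h1M : ∀ l, (0:ℝ) < 1 + M l z := fun l => by linarith [hMpos l]
  have hder : ∀ k, deriv (M k) z = d k := fun k => (hd k).deriv
  have hP : HasDerivAt (fun w => ∏ k, (1 + M k w))
      (∑ k, (∏ j ∈ univ.erase k, (1 + M j z)) • d k) z :=
    HasDerivAt.fun_finsetProd (fun k _ => (hd k).const_add 1)
  have hQ : ∀ i : Fin r, HasDerivAt (fun w => M i w * ∏ j ∈ univ.erase i, (1 + M j w))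
      (d i * (∏ j ∈ univ.erase i, (1 + M j z))
        + M i z * ∑ k ∈ univ.erase i, (∏ l ∈ (univ.erase i).erase k, (1 + M l z)) • d k) z :=
    fun i => (hd i).mul (HasDerivAt.fun_finsetProd (fun k _ => (hd k).const_add 1))
  have hD := hP.fun_sub (HasDerivAt.fun_sum fun i (_ : i ∈ univ) => hQ i)
  have hDeq : deriv (fun w => ∏ k, (1 + M k w)
          - ∑ i, M i w * ∏ j ∈ Finset.univ.erase i, (1 + M j w)) z
      = -∑ i, M i z * ∑ k ∈ univ.erase i,
            d k * ∏ l ∈ (univ.erase i).erase k, (1 + M l z) := by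
    rw [hD.deriv]
    simp only [smul_eq_mul]
    rw [Finset.sum_add_distrib]
    have hX : ∑ i, d i * ∏ j ∈ univ.erase i, (1 + M j z)
        = ∑ k, (∏ j ∈ univ.erase k, (1 + M j z)) * d k :=
      Finset.sum_congr rfl fun i _ => mul_comm _ _
    rw [hX, sub_add_eq_sub_sub, sub_self, zero_sub, neg_inj]
    refine Finset.sum_congr rfl fun i _ => ?_
    congr 1
    exact Finset.sum_congr rfl fun k _ => mul_comm _ _
  have hpos : 0 < ∑ i, M i z * ∑ k ∈ univ.erase i,
      d k * ∏ l ∈ (univ.erase i).erase k, (1 + M l z) := by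
    apply Finset.sum_pos _ univ_nonempty
    intro i _
    apply mul_pos (hMpos i)
    apply Finset.sum_pos
    · intro k _
      exact mul_pos (hdpos k) (Finset.prod_pos fun l _ => h1M l)
    · rw [← Finset.card_pos, Finset.card_erase_of_mem (Finset.mem_univ i),
        Finset.card_univ, Fintype.card_fin]
      omega
  constructor
  · rw [hDeq]
    simp only [hder]
  · rw [hDeq]
    linarith
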